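/- arXiv:1608.00319 — 3 statements merged into one kernel-verified Lean document; each statement's English description precedes it below -/
import Mathlib

section
/- Let P and Q be directed posets, P' ⊆ P, Q' ⊆ Q, and let κ ≥ λ ≥ μ be cardinals with κ regular. If (P',P) ≥_T (Q',Q) and P' has calibre (κ,λ,μ) in P, then Q' has calibre (κ,λ,μ) in Q. -/
open Cardinal Set

universe u v

/-- `C` is cofinal for `P'` in `P`: every element of `P'` lies below some element of `C`. -/
def IsCofinalFor' {P : Type u} [Preorder P] (P' C : Set P) : Prop :=
  ∀ p ∈ P', ∃ c ∈ C, p ≤ c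

/-- `φ : P → Q` is a relative Tukey quotient from `(P', P)` to `(Q', Q)`:
it maps every subset of `P` cofinal for `P'` to a subset of `Q` cofinal for `Q'`. -/
def IsRelTukeyQuotient {P : Type u} {Q : Type v} [Preorder P] [Preorder Q]
    (P' : Set P) (Q' : Set Q) (φ : P → Q) : Prop :=
  ∀ C : Set P, IsCofinalFor' P' C → IsCofinalFor' Q' (φ '' C)

/-- `(P', P) ≥_T (Q', Q)`: there exists a relative Tukey quotient. -/
def RelTukeyGE {P : Type u} {Q : Type v} [Preorder P] [Preorder Q]
    (P' : Set P) (Q' : Set Q) : Prop :=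
  ∃ φ : P → Q, IsRelTukeyQuotient P' Q' φ

/-- `P ≥_T Q`: there is a Tukey quotient from `P` to `Q`. -/
def TukeyGE (P : Type u) (Q : Type v) [Preorder P] [Preorder Q] : Prop :=
  RelTukeyGE (Set.univ : Set P) (Set.univ : Set Q)

/-- `A` is unbounded in `P`: it has no upper bound in `P`. -/
def UnboundedIn {P : Type u} [Preorder P] (A : Set P) : Prop :=
  ¬ ∃ b : P, ∀ a ∈ A, a ≤ b

/-- `P'` has calibre `(κ, l, m)` in `P`: every `κ`-sized subset `T` of `P'` has an
`l`-sized subset `T₀` all of whose `m`-sized subsets have an upper bound in `P`. -/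
def HasCalibre {P : Type u} [Preorder P] (P' : Set P) (κ l m : Cardinal.{u}) : Prop :=
  ∀ T ⊆ P', #↥T = κ → ∃ T₀ ⊆ T, #↥T₀ = l ∧
    ∀ T₁ ⊆ T₀, #↥T₁ = m → ∃ b : P, ∀ x ∈ T₁, x ≤ b

/-- If `(P', P) ≥_T (Q', Q)`, `κ ≥ l ≥ m` with `κ` regular, and `P'` has calibre
`(κ, l, m)` in `P`, then `Q'` has calibre `(κ, l, m)` in `Q`. -/
theorem statement4 {P Q : Type u} [PartialOrder P] [PartialOrder Q]
    (hPdir : ∀ a b : P, ∃ c, a ≤ c ∧ b ≤ c) (hQdir : ∀ a b : Q, ∃ c, a ≤ c ∧ b ≤ c)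
    (P' : Set P) (Q' : Set Q) (κ l m : Cardinal.{u})
    (hlκ : l ≤ κ) (hml : m ≤ l) (hreg : κ.IsRegular)
    (hT : RelTukeyGE P' Q') (hcal : HasCalibre P' κ l m) :
    HasCalibre Q' κ l m := by
  obtain ⟨φ, hφ⟩ := hT
  have hg : ∀ q ∈ Q', ∃ p ∈ P', ∀ x : P, p ≤ x → q ≤ φ x := by
    intro q hq
    by_contra h
    push_neg at h
    have hcof : IsCofinalFor' P' {x : P | ¬ q ≤ φ x} := by
      intro p hp
      obtain ⟨x, hx1, hx2⟩ := h p hp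
      exact ⟨x, hx2, hx1⟩
    obtain ⟨c, hc, hqc⟩ := hφ _ hcof q hq
    obtain ⟨x, hx, rfl⟩ := hc
    exact hx hqc
  choose g hgP' hgspec using hg
  intro T hTQ hTcard
  set f : ↥T → P := fun q => g q.1 (hTQ q.2) with hf
  have hfP' : ∀ q : ↥T, f q ∈ P' := fun q => hgP' q.1 (hTQ q.2)
  have hfspec : ∀ (q : ↥T) (x : P), f q ≤ x → (q : Q) ≤ φ x :=
    fun q x hx => hgspec q.1 (hTQ q.2) x hx
  by_cases hS : #(Set.range f) = κ
  · obtain ⟨S₀, hS₀sub, hS₀card, hS₀bd⟩ :=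
      hcal (Set.range f) (by rintro p ⟨q, rfl⟩; exact hfP' q) hS
    have hsec : ∀ s : ↥S₀, ∃ q : ↥T, f q = s := fun s => hS₀sub s.2
    choose sec hsec using hsec
    have hinj : Function.Injective (fun s : ↥S₀ => (sec s : Q)) := by
      intro s t hst
      have h1 : sec s = sec t := Subtype.ext hst
      apply Subtype.ext
      rw [← hsec s, ← hsec t, h1]
    refine ⟨Set.range (fun s : ↥S₀ => (sec s : Q)), ?_, ?_, ?_⟩
    · rintro x ⟨s, rfl⟩; exact (sec s).2
    · rw [Cardinal.mk_range_eq _ hinj, hS₀card]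
    · intro T₁ hT₁ hT₁card
      have hT₁T : ∀ x ∈ T₁, x ∈ T := by
        intro x hx
        obtain ⟨s, rfl⟩ := hT₁ hx
        exact (sec s).2
      set F : ↥T₁ → P := fun q => f ⟨q.1, hT₁T q.1 q.2⟩ with hF
      have hFval : ∀ q : ↥T₁, ∃ s : ↥S₀, (sec s : Q) = q.1 ∧ F q = s := by
        intro q
        obtain ⟨s, hs⟩ := hT₁ q.2
        refine ⟨s, hs, ?_⟩
        have : (⟨q.1, hT₁T q.1 q.2⟩ : ↥T) = sec s := Subtype.ext hs.symm
        rw [hF]; simp only [this, hsec]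
      have hFinj : Function.Injective F := by
        intro a b hab
        obtain ⟨s, hs1, hs2⟩ := hFval a
        obtain ⟨t, ht1, ht2⟩ := hFval b
        have : s = t := by apply Subtype.ext; rw [← hs2, ← ht2, hab]
        apply Subtype.ext
        rw [← hs1, ← ht1, this]
      have hsub : Set.range F ⊆ S₀ := by
        rintro p ⟨q, rfl⟩
        obtain ⟨s, _, hs2⟩ := hFval q
        rw [hs2]; exact s.2
      obtain ⟨b, hb⟩ := hS₀bd (Set.range F) hsub
        (by rw [Cardinal.mk_range_eq _ hFinj, hT₁card])
      refine ⟨φ b, fun x hx => ?_⟩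
      exact hfspec ⟨x, hT₁T x hx⟩ b (hb _ ⟨⟨x, hx⟩, rfl⟩)
  · have hSlt : #(Set.range f) < κ := by
      refine lt_of_le_of_ne ?_ hS
      rw [← hTcard]; exact Cardinal.mk_range_le
    set f' : ↥T → ↥(Set.range f) := fun q => ⟨f q, Set.mem_range_self q⟩ with hf'
    have hsum : #↥T = Cardinal.sum (fun s : ↥(Set.range f) => #(f' ⁻¹' {s})) := by
      rw [← Cardinal.mk_sigma]
      exact Cardinal.mk_congr (Equiv.sigmaFiberEquiv f').symm
    have hex : ∃ s : ↥(Set.range f), #(f' ⁻¹' {s}) = κ := by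
      by_contra h
      push_neg at h
      have hall : ∀ s, #(f' ⁻¹' {s}) < κ := by
        intro s
        refine lt_of_le_of_ne ?_ (h s)
        calc #(f' ⁻¹' {s}) ≤ #↥T := Cardinal.mk_set_le _
          _ = κ := hTcard
      have := Cardinal.sum_lt_of_isRegular hreg hSlt hall
      rw [← hsum, hTcard] at this
      exact lt_irrefl _ this
    obtain ⟨s, hs⟩ := hex
    set F : Set Q := Subtype.val '' (f' ⁻¹' {s}) with hFdef
    have hFcard : #↥F = κ := by
      rw [hFdef, Cardinal.mk_image_eq Subtype.val_injective, hs]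
    have hlF : l ≤ #↥F := by rw [hFcard]; exact hlκ
    obtain ⟨T₀, hT₀F, hT₀card⟩ := Cardinal.le_mk_iff_exists_subset.mp hlF
    refine ⟨T₀, ?_, hT₀card, ?_⟩
    · intro x hx
      obtain ⟨q, _, rfl⟩ := hT₀F hx
      exact q.2
    · intro T₁ hT₁ _
      refine ⟨φ s.1, fun x hx => ?_⟩
      obtain ⟨q, hq, hqx⟩ := hT₀F (hT₁ hx)
      have : f q = s.1 := congrArg Subtype.val (Set.mem_singleton_iff.mp hq)
      have := hfspec q s.1 (le_of_eq this)
      rwa [hqx] at this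
end

section
/- Let P be a directed poset, P' ⊆ P, and κ a regular cardinal. Then P' fails to have calibre κ in P if and only if (P',P) ≥_T κ, where κ is viewed as a poset with its usual order. -/
open Cardinal Set

universe u v

lemma aux_mk_ord_toType (κ : Cardinal.{u}) : #κ.ord.ToType = κ := by
  rw [Cardinal.mk_toType, Cardinal.card_ord]

lemma aux_bound {κ : Cardinal.{u}} (hreg : κ.IsRegular) {S : Set κ.ord.ToType}
    (hS : #S < κ) : ∃ b, ∀ a ∈ S, a ≤ b := by
  have h : #S < (@Ordinal.type κ.ord.ToType (· < ·) isWellOrder_lt).cof := by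
    rwa [Ordinal.type_toType, hreg.cof_eq]
  obtain ⟨b, hb⟩ : ∃ b, ∀ a ∈ S, a < b := by
    by_contra hc
    push_neg at hc
    have hcof : IsCofinal S := fun a => by
      obtain ⟨x, hx, hax⟩ := hc a
      exact ⟨x, hx, hax⟩
    exact absurd (Order.cof_le hcof) (not_le.2 (by rwa [Ordinal.cof_type] at h))
  exact ⟨b, fun a ha => (hb a ha).le⟩

lemma aux_Iic {κ : Cardinal.{u}} (hreg : κ.IsRegular) (b : κ.ord.ToType) :
    #(Set.Iic b) < κ := by
  have h1 : #(Set.Iio b) < κ := Cardinal.mk_Iio_ord_toType b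
  have hsub : Set.Iic b ⊆ insert b (Set.Iio b) := by
    intro x hx
    rcases lt_or_eq_of_le (Set.mem_Iic.1 hx) with h | h
    · exact Set.mem_insert_of_mem _ h
    · exact h ▸ Set.mem_insert _ _
  calc #(Set.Iic b) ≤ #(insert b (Set.Iio b) : Set _) := mk_le_mk_of_subset hsub
    _ ≤ #(Set.Iio b) + 1 := mk_insert_le
    _ < κ := Cardinal.add_lt_of_lt hreg.aleph0_le h1
        (one_lt_aleph0.trans_le hreg.aleph0_le)


/-- For a directed poset `P`, `P' ⊆ P` and a regular cardinal `κ`: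
`P'` fails to have calibre `κ` in `P` iff `(P', P) ≥_T κ`,
where `κ` is viewed as a poset with its usual (ordinal) order. -/
theorem statement5 {P : Type u} [PartialOrder P]
    (hPdir : ∀ a b : P, ∃ c, a ≤ c ∧ b ≤ c)
    (P' : Set P) (κ : Cardinal.{u}) (hreg : κ.IsRegular) :
    ¬ HasCalibre P' κ κ κ ↔ RelTukeyGE P' (Set.univ : Set κ.ord.ToType) := by
  constructor
  · intro hcal
    rw [HasCalibre] at hcal
    push_neg at hcal
    obtain ⟨T, hTP, hTκ, hT⟩ := hcal
    -- every p bounds < κ elements of T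
    have hsmall : ∀ p : P, #({x ∈ T | x ≤ p} : Set P) < κ := by
      intro p
      by_contra hge
      have hle : #({x ∈ T | x ≤ p} : Set P) ≤ κ := by
        rw [← hTκ]; exact mk_le_mk_of_subset (fun x hx => hx.1)
      have heq : #({x ∈ T | x ≤ p} : Set P) = κ := le_antisymm hle (not_lt.1 hge)
      obtain ⟨T₁, hT₁sub, hT₁κ, hT₁unb⟩ := hT _ (fun x hx => hx.1) heq
      obtain ⟨x, hx, hxb⟩ := hT₁unb p
      exact hxb (hT₁sub hx).2
    -- bijection between κ.ord.ToType and T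
    have hcard : #κ.ord.ToType = #↥T := by rw [aux_mk_ord_toType, hTκ]
    obtain ⟨e⟩ := Cardinal.eq.1 hcard
    -- the sets A_p are small
    have hA : ∀ p : P, #({α : κ.ord.ToType | (e α : P) ≤ p} : Set _) < κ := by
      intro p
      refine lt_of_le_of_lt ?_ (hsmall p)
      refine mk_le_of_injective (f := fun α =>
        (⟨(e α.1 : P), (e α.1).2, α.2⟩ : ({x ∈ T | x ≤ p} : Set P))) ?_
      intro a b hab
      apply Subtype.ext
      apply e.injective
      apply Subtype.ext
      exact congrArg (fun (y : ({x ∈ T | x ≤ p} : Set P)) => (y : P)) hab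
    choose φ hφ using fun p => aux_bound hreg (hA p)
    refine ⟨φ, fun C hC β _ => ?_⟩
    obtain ⟨c, hcC, hc⟩ := hC (e β : P) (hTP (e β).2)
    exact ⟨φ c, ⟨c, hcC, rfl⟩, hφ c β hc⟩
  · rintro ⟨φ, hφ⟩ hcal
    -- step 1 : choose witnesses p_β
    have key : ∀ β : κ.ord.ToType, ∃ p, p ∈ P' ∧ ∀ q, p ≤ q → β ≤ φ q := by
      intro β
      by_contra h
      push_neg at h
      have hcof : IsCofinalFor' P' {q | ¬ β ≤ φ q} := by
        intro p hp
        obtain ⟨q, hq1, hq2⟩ := h p hp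
        exact ⟨q, not_le.2 hq2, hq1⟩
      obtain ⟨x, ⟨c, hc, rfl⟩, hx⟩ := hφ _ hcof β (mem_univ β)
      exact hc hx
    choose f hfP hf using key
    -- fibers of f are small
    have hfiber : ∀ t : P, #(f ⁻¹' {t}) < κ := by
      intro t
      refine lt_of_le_of_lt (mk_le_mk_of_subset ?_) (aux_Iic hreg (φ t))
      intro β hβ
      have : f β = t := hβ
      exact Set.mem_Iic.2 (this ▸ hf β t this.le)
    -- range f has size κ
    have hrange : #(Set.range f) = κ := by
      refine le_antisymm ?_ ?_
      · have h3 : #(Set.range f) ≤ #κ.ord.ToType := mk_range_le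
        rwa [aux_mk_ord_toType] at h3
      by_contra hlt
      push_neg at hlt
      have huniv : (⋃ t : Set.range f, f ⁻¹' {(t : P)}) = Set.univ := by
        ext β
        simp only [Set.mem_iUnion, Set.mem_preimage, Set.mem_singleton_iff, Set.mem_univ,
          iff_true]
        exact ⟨⟨f β, Set.mem_range_self β⟩, rfl⟩
      have hlt2 : #(⋃ t : Set.range f, f ⁻¹' {(t : P)}) < κ := by
        refine lt_of_le_of_lt (mk_iUnion_le_sum_mk) ?_
        exact Cardinal.sum_lt_of_isRegular hreg hlt (fun t => hfiber t)
      rw [huniv] at hlt2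
      rw [Cardinal.mk_univ, aux_mk_ord_toType] at hlt2
      exact lt_irrefl _ hlt2
    -- apply calibre
    obtain ⟨T₀, hT₀sub, hT₀κ, hT₀⟩ := hcal (Set.range f)
      (fun x hx => hx.choose_spec ▸ hfP hx.choose) hrange
    obtain ⟨b, hb⟩ := hT₀ T₀ subset_rfl hT₀κ
    -- T₀ injects into Iic (φ b)
    have hinj : #↥T₀ ≤ #(Set.Iic (φ b)) := by
      have hg : ∀ t : ↥T₀, ∃ β, f β = (t : P) := fun t => hT₀sub t.2
      choose g hg using hg
      refine mk_le_of_injective (f := fun t =>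
        (⟨g t, Set.mem_Iic.2 (hf (g t) b ((hg t).le.trans (hb _ t.2)))⟩ :
          Set.Iic (φ b))) ?_
      intro a c hac
      have : g a = g c := congrArg Subtype.val hac
      apply Subtype.ext
      rw [← hg a, ← hg c, this]
    rw [hT₀κ] at hinj
    exact absurd (hinj.trans_lt (aux_Iic hreg (φ b))) (lt_irrefl κ)
end

section
/- For directed posets P₁ and P₂, spec(P₁ × P₂) = spec(P₁) ∪ spec(P₂). -/
open Cardinal Set

universe u v

/-- `spec(P)`: the set of regular cardinals `κ` with `P ≥_T κ`, where `κ` is viewed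
as a poset with its usual (ordinal) order. -/
def specOf (P : Type u) [Preorder P] : Set Cardinal.{u} :=
  {κ : Cardinal.{u} | κ.IsRegular ∧ TukeyGE P κ.ord.ToType}

/-- A Tukey map: sends unbounded sets to unbounded sets. -/
def IsTukeyMapAux {P : Type u} {Q : Type v} [Preorder P] [Preorder Q] (f : Q → P) : Prop :=
  ∀ A : Set Q, UnboundedIn A → UnboundedIn (f '' A)

lemma tukeyGE_iff_map {P : Type u} {Q : Type v} [Preorder P] [Preorder Q] :
    TukeyGE P Q ↔ ∃ f : Q → P, IsTukeyMapAux f := by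
  constructor
  · rintro ⟨φ, hφ⟩
    have key : ∀ q : Q, ∃ p : P, ∀ c : P, p ≤ c → q ≤ φ c := by
      intro q
      by_contra h
      push_neg at h
      have hcof : IsCofinalFor' (Set.univ : Set P) {c : P | ¬ q ≤ φ c} := by
        intro p _
        obtain ⟨c, hc1, hc2⟩ := h p
        exact ⟨c, hc2, hc1⟩
      obtain ⟨x, hx, hqx⟩ := hφ _ hcof q (Set.mem_univ q)
      obtain ⟨c, hc, rfl⟩ := hx
      exact hc hqx
    choose f hf using key
    refine ⟨f, fun A hA hbdd => hA ?_⟩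
    obtain ⟨b, hb⟩ := hbdd
    exact ⟨φ b, fun q hq => hf q b (hb _ ⟨q, hq, rfl⟩)⟩
  · rintro ⟨f, hf⟩
    have key : ∀ p : P, ∃ b : Q, ∀ q : Q, f q ≤ p → q ≤ b := by
      intro p
      have : ¬ UnboundedIn (f '' {q : Q | f q ≤ p}) := by
        intro h; exact h ⟨p, by rintro x ⟨q, hq, rfl⟩; exact hq⟩
      have h2 : ¬ UnboundedIn {q : Q | f q ≤ p} := fun h => this (hf _ h)
      unfold UnboundedIn at h2
      push_neg at h2
      obtain ⟨b, hb⟩ := h2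
      exact ⟨b, fun q hq => hb q hq⟩
    choose φ hφ using key
    refine ⟨φ, fun C hC q _ => ?_⟩
    obtain ⟨c, hc, hfc⟩ := hC (f q) (Set.mem_univ _)
    exact ⟨φ c, ⟨c, hc, rfl⟩, hφ c q hfc⟩

/-- Projection composed with a quotient. -/
lemma fst_quotient {P₁ P₂ : Type u} [Preorder P₁] [Preorder P₂] [Nonempty P₂]
    {Q : Type v} [Preorder Q] (h : TukeyGE P₁ Q) : TukeyGE (P₁ × P₂) Q := by
  obtain ⟨ψ, hψ⟩ := h
  refine ⟨ψ ∘ Prod.fst, fun C hC => ?_⟩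
  have hfst : IsCofinalFor' (Set.univ : Set P₁) (Prod.fst '' C) := by
    intro p _
    obtain ⟨c, hc, hle⟩ := hC (p, Classical.arbitrary P₂) (Set.mem_univ _)
    exact ⟨c.1, ⟨c, hc, rfl⟩, hle.1⟩
  have := hψ _ hfst
  rwa [Set.image_comp] at *
  
lemma snd_quotient {P₁ P₂ : Type u} [Preorder P₁] [Preorder P₂] [Nonempty P₁]
    {Q : Type v} [Preorder Q] (h : TukeyGE P₂ Q) : TukeyGE (P₁ × P₂) Q := by
  obtain ⟨ψ, hψ⟩ := h
  refine ⟨ψ ∘ Prod.snd, fun C hC => ?_⟩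
  have hsnd : IsCofinalFor' (Set.univ : Set P₂) (Prod.snd '' C) := by
    intro p _
    obtain ⟨c, hc, hle⟩ := hC (Classical.arbitrary P₁, p) (Set.mem_univ _)
    exact ⟨c.2, ⟨c, hc, rfl⟩, hle.2⟩
  have := hψ _ hsnd
  rwa [Set.image_comp] at *

/-- For directed posets `P₁` and `P₂` (with the coordinatewise order on the product),
`spec(P₁ × P₂) = spec(P₁) ∪ spec(P₂)`. -/
theorem statement7 {P₁ P₂ : Type u} [PartialOrder P₁] [PartialOrder P₂]
    [Nonempty P₁] [Nonempty P₂]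
    (h1 : ∀ a b : P₁, ∃ c, a ≤ c ∧ b ≤ c) (h2 : ∀ a b : P₂, ∃ c, a ≤ c ∧ b ≤ c) :
    specOf (P₁ × P₂) = specOf P₁ ∪ specOf P₂ := by
  ext κ
  constructor
  · rintro ⟨hreg, hT⟩
    set T := κ.ord.ToType
    obtain ⟨f, hf⟩ := tukeyGE_iff_map.mp hT
    by_cases hc : ∃ g : T → P₁, IsTukeyMapAux g
    · exact Or.inl ⟨hreg, tukeyGE_iff_map.mpr hc⟩
    · push_neg at hc
      have h1f := hc (fun t => (f t).1)
      unfold IsTukeyMapAux at h1f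
      push_neg at h1f
      obtain ⟨A, hA, hAb⟩ := h1f
      unfold UnboundedIn at hAb
      push_neg at hAb
      obtain ⟨b₁, hb₁⟩ := hAb
      -- choose e : T → T with e α ∈ A, α ≤ e α
      have he : ∀ α : T, ∃ a ∈ A, α ≤ a := by
        intro α
        by_contra h
        push_neg at h
        exact hA ⟨α, fun a ha => (h a ha).le⟩
      choose e heA hee using he
      refine Or.inr ⟨hreg, tukeyGE_iff_map.mpr ⟨fun α => (f (e α)).2, ?_⟩⟩
      intro U hU hbdd
      obtain ⟨b₂, hb₂⟩ := hbdd
      have hBu : UnboundedIn (e '' U) := by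
        rintro ⟨b, hb⟩
        exact hU ⟨b, fun u hu => (hee u).trans (hb _ ⟨u, hu, rfl⟩)⟩
      refine hf _ hBu ⟨(b₁, b₂), ?_⟩
      rintro x ⟨y, ⟨u, hu, rfl⟩, rfl⟩
      constructor
      · exact hb₁ _ ⟨e u, heA u, rfl⟩
      · exact hb₂ _ ⟨u, hu, rfl⟩
  · rintro (⟨hreg, hT⟩ | ⟨hreg, hT⟩)
    · exact ⟨hreg, fst_quotient hT⟩
    · exact ⟨hreg, snd_quotient hT⟩
end
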